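/- Weak modal refinement is compositional with respect to asynchronous composition: if S' ≤_m* S, T' ≤_m* T, and S and T are composable, then S' and T' are composable and S' ⊗_as T' ≤_m* S ⊗_as T. -/

import Mathlib

/-- A modal I/O-transition system (MIO): states, an initial state, a signature of
input, output and internal actions (pairwise disjoint subsets of the action
universe `A`), may-transitions and must-transitions with must ⊆ may. -/
structure MIO (A : Type) where
  State : Type
  start : State
  inp : Set A
  out : Set A
  intl : Set A
  may : State → A → State → Prop
  must : State → A → State → Prop
  inp_out : ∀ a, a ∈ inp → a ∈ out → False
  inp_intl : ∀ a, a ∈ inp → a ∈ intl → False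
  out_intl : ∀ a, a ∈ out → a ∈ intl → False
  must_sub : ∀ s a s', must s a s' → may s a s'

namespace MIO

variable {A B : Type}

/-- The set of all actions of a MIO. -/
def act (S : MIO A) : Set A := S.inp ∪ S.out ∪ S.intl

/-- Two MIOs have the same signature. -/
def SigEq (S T : MIO A) : Prop := S.inp = T.inp ∧ S.out = T.out ∧ S.intl = T.intl

/-- Strong modal refinement `S ≤_m T`. -/
def StrongRefines (S T : MIO A) : Prop :=
  SigEq S T ∧
  ∃ R : S.State → T.State → Prop, R S.start T.start ∧
    ∀ s t, R s t →
      (∀ a t', T.must t a t' → ∃ s', S.must s a s' ∧ R s' t') ∧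
      (∀ a s', S.may s a s' → ∃ t', T.may t a t' ∧ R s' t')

/-- One internal must-transition. -/
def tauMust (S : MIO A) (s s' : S.State) : Prop := ∃ a ∈ S.intl, S.must s a s'

/-- Finitely many (possibly zero) internal must-transitions. -/
def tauMustStar (S : MIO A) : S.State → S.State → Prop := Relation.ReflTransGen S.tauMust

/-- One internal may-transition. -/
def tauMay (S : MIO A) (s s' : S.State) : Prop := ∃ a ∈ S.intl, S.may s a s'

/-- Finitely many (possibly zero) internal may-transitions. -/
def tauMayStar (S : MIO A) : S.State → S.State → Prop := Relation.ReflTransGen S.tauMay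

/-- Weak modal refinement `S ≤_m* T`. -/
def WeakRefines (S T : MIO A) : Prop :=
  SigEq S T ∧
  ∃ R : S.State → T.State → Prop, R S.start T.start ∧
    ∀ s t, R s t →
      (∀ a ∈ T.inp ∪ T.out, ∀ t', T.must t a t' →
        ∃ s1 s2 s', S.tauMustStar s s1 ∧ S.must s1 a s2 ∧ S.tauMustStar s2 s' ∧ R s' t') ∧
      (∀ a ∈ T.intl, ∀ t', T.must t a t' → ∃ s', S.tauMustStar s s' ∧ R s' t') ∧
      (∀ a ∈ S.inp ∪ S.out, ∀ s', S.may s a s' →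
        ∃ t1 t2 t', T.tauMayStar t t1 ∧ T.may t1 a t2 ∧ T.tauMayStar t2 t' ∧ R s' t') ∧
      (∀ a ∈ S.intl, ∀ s', S.may s a s' → ∃ t', T.tauMayStar t t' ∧ R s' t')

/-- Shared actions of two MIOs. -/
def shared (S T : MIO A) : Set A := S.act ∩ T.act

/-- Two MIOs are (syntactically) composable if their actions overlap only on
complementary types. -/
def Composable (S T : MIO A) : Prop :=
  shared S T ⊆ (S.inp ∩ T.out) ∪ (T.inp ∩ S.out)

/-- Synchronous composition `S ⊗_sy T` of composable MIOs. -/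
def syncComp (S T : MIO A) (_h : Composable S T) : MIO A where
  State := S.State × T.State
  start := (S.start, T.start)
  inp := (S.inp ∪ T.inp) \ shared S T
  out := (S.out ∪ T.out) \ shared S T
  intl := S.intl ∪ T.intl ∪ shared S T
  may p a p' :=
    (a ∈ shared S T ∧ S.may p.1 a p'.1 ∧ T.may p.2 a p'.2) ∨
    (a ∈ S.act ∧ a ∉ shared S T ∧ S.may p.1 a p'.1 ∧ p'.2 = p.2) ∨
    (a ∈ T.act ∧ a ∉ shared S T ∧ T.may p.2 a p'.2 ∧ p'.1 = p.1)
  must p a p' :=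
    (a ∈ shared S T ∧ S.must p.1 a p'.1 ∧ T.must p.2 a p'.2) ∨
    (a ∈ S.act ∧ a ∉ shared S T ∧ S.must p.1 a p'.1 ∧ p'.2 = p.2) ∨
    (a ∈ T.act ∧ a ∉ shared S T ∧ T.must p.2 a p'.2 ∧ p'.1 = p.1)
  inp_out := by
    intro a ha hb
    have h1 := S.inp_out a; have h2 := T.inp_out a
    simp only [Set.mem_diff, Set.mem_union, shared, act, Set.mem_inter_iff] at ha hb
    tauto
  inp_intl := by
    intro a ha hb
    have h1 := S.inp_intl a; have h2 := T.inp_intl a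
    simp only [Set.mem_diff, Set.mem_union, shared, act, Set.mem_inter_iff] at ha hb
    tauto
  out_intl := by
    intro a ha hb
    have h1 := S.out_intl a; have h2 := T.out_intl a
    simp only [Set.mem_diff, Set.mem_union, shared, act, Set.mem_inter_iff] at ha hb
    tauto
  must_sub := by
    rintro p a p' (⟨h1, h2, h3⟩ | ⟨h1, h2, h3, h4⟩ | ⟨h1, h2, h3, h4⟩)
    · exact Or.inl ⟨h1, S.must_sub _ _ _ h2, T.must_sub _ _ _ h3⟩
    · exact Or.inr (Or.inl ⟨h1, h2, S.must_sub _ _ _ h3, h4⟩)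
    · exact Or.inr (Or.inr ⟨h1, h2, T.must_sub _ _ _ h3, h4⟩)

/-- Reachability (w.r.t. may-transitions) from the initial state. -/
def Reachable (M : MIO A) (s : M.State) : Prop :=
  Relation.ReflTransGen (fun x y => ∃ a, M.may x a y) M.start s

/-- Strong modal compatibility `S ⇄_sc T`. -/
def StrongCompat (S T : MIO A) : Prop :=
  ∃ h : Composable S T,
    ∀ p : S.State × T.State, (syncComp S T h).Reachable p →
      (∀ a ∈ S.out ∩ T.inp, ∀ s', S.may p.1 a s' → ∃ t', T.must p.2 a t') ∧
      (∀ a ∈ T.out ∩ S.inp, ∀ t', T.may p.2 a t' → ∃ s', S.must p.1 a s')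

/-- Weak modal compatibility `S ⇄_wc T`. -/
def WeakCompat (S T : MIO A) : Prop :=
  ∃ h : Composable S T,
    ∀ p : S.State × T.State, (syncComp S T h).Reachable p →
      (∀ a ∈ S.out ∩ T.inp, ∀ s', S.may p.1 a s' →
        ∃ t1 t', T.tauMustStar p.2 t1 ∧ T.must t1 a t') ∧
      (∀ a ∈ T.out ∩ S.inp, ∀ t', T.may p.2 a t' →
        ∃ s1 s', S.tauMustStar p.1 s1 ∧ S.must s1 a s')

/-- Finite executions: `Trace M s as s'` means `M` can go from `s` to `s'` by
a sequence of may-transitions labelled by the list of actions `as`. -/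
inductive Trace (M : MIO A) : M.State → List A → M.State → Prop
  | nil (s : M.State) : Trace M s [] s
  | cons {s s' s'' : M.State} {a : A} {as : List A} :
      M.may s a s' → Trace M s' as s'' → Trace M s (a :: as) s''

/-- Renaming the actions of a MIO along an injective function. -/
def rename (f : A → B) (hf : Function.Injective f) (S : MIO A) : MIO B where
  State := S.State
  start := S.start
  inp := f '' S.inp
  out := f '' S.out
  intl := f '' S.intl
  may s b s' := ∃ a, b = f a ∧ S.may s a s'
  must s b s' := ∃ a, b = f a ∧ S.must s a s'
  inp_out := by
    rintro b ⟨a1, h1, rfl⟩ ⟨a2, h2, heq⟩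
    obtain rfl := hf heq
    exact S.inp_out a2 h1 h2
  inp_intl := by
    rintro b ⟨a1, h1, rfl⟩ ⟨a2, h2, heq⟩
    obtain rfl := hf heq
    exact S.inp_intl a2 h1 h2
  out_intl := by
    rintro b ⟨a1, h1, rfl⟩ ⟨a2, h2, heq⟩
    obtain rfl := hf heq
    exact S.out_intl a2 h1 h2
  must_sub := by
    rintro s b s' ⟨a, rfl, h⟩
    exact ⟨a, rfl, S.must_sub _ _ _ h⟩

-- Tagging function: actions in `o` become the fresh "queue input" actions `n^▷`
-- (encoded as `Sum.inr n`), all other actions are kept (as `Sum.inl a`).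
open Classical in
noncomputable def tagged (o : Set A) : A → A ⊕ A :=
  fun a => if a ∈ o then Sum.inr a else Sum.inl a

theorem tagged_injective (o : Set A) : Function.Injective (tagged o) := by
  classical
  intro a b h
  by_cases ha : a ∈ o <;> by_cases hb : b ∈ o <;>
    simp [tagged, ha, hb] at h <;> tauto

/-- The queue MIO `Q_o`: a FIFO buffer for messages in `o`. States are finite
strings over `A` (with reachable states being strings over `o`), inputs are the
tagged actions `n^▷ = Sum.inr n`, outputs the actions `n = Sum.inl n` for `n ∈ o`.
Enqueue at the front, dequeue from the back; may- and must-transitions coincide. -/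
def queueMIO (o : Set A) : MIO (A ⊕ A) where
  State := List A
  start := []
  inp := Sum.inr '' o
  out := Sum.inl '' o
  intl := ∅
  may s b s' :=
    (∃ n ∈ o, b = Sum.inr n ∧ s' = n :: s) ∨ (∃ n ∈ o, b = Sum.inl n ∧ s = s' ++ [n])
  must s b s' :=
    (∃ n ∈ o, b = Sum.inr n ∧ s' = n :: s) ∨ (∃ n ∈ o, b = Sum.inl n ∧ s = s' ++ [n])
  inp_out := by rintro b ⟨n, hn, rfl⟩ ⟨m, hm, h⟩; simp at h
  inp_intl := by rintro b _ h; simp at h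
  out_intl := by rintro b _ h; simp at h
  must_sub := fun _ _ _ h => h

theorem omega_composable (o : Set A) (S : MIO A) (ho : o ⊆ S.out) :
    Composable (rename (tagged o) (tagged_injective o) S) (queueMIO o) := by
  classical
  rintro b ⟨hb1, hb2⟩
  have hq : (∃ n ∈ o, Sum.inr n = b) ∨ (∃ n ∈ o, Sum.inl n = b) := by
    simpa [queueMIO, act, Set.image, Set.mem_union] using hb2
  have hr : ∃ a, ((a ∈ S.inp ∨ a ∈ S.out) ∨ a ∈ S.intl) ∧ tagged o a = b := by
    simpa [rename, act, ← Set.image_union] using hb1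
  obtain ⟨a, _, ha⟩ := hr
  rcases hq with ⟨n, hn, hb⟩ | ⟨n, hn, hb⟩
  · right
    constructor
    · exact ⟨n, hn, hb⟩
    · refine ⟨n, ho hn, ?_⟩
      rw [← hb]; simp [tagged, hn]
  · exfalso
    rw [← hb] at ha
    by_cases h : a ∈ o
    · simp [tagged, h] at ha
    · simp [tagged, h] at ha
      exact h (ha ▸ hn)

/-- `Ω_o(S)`: the MIO `S` with an output queue for `o ⊆ out_S`, i.e. the
synchronous product of the renamed MIO `S_o^▷` with the queue MIO `Q_o`. -/
noncomputable def Omega (o : Set A) (S : MIO A) (ho : o ⊆ S.out) : MIO (A ⊕ A) :=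
  syncComp (rename (tagged o) (tagged_injective o) S) (queueMIO o) (omega_composable o S ho)

/-- The outputs of `S` that are inputs of `T`. -/
def oOf (S T : MIO A) : Set A := S.out ∩ T.inp

/-- `Ω_{o_S}(S)` where `o_S = out_S ∩ in_T`. -/
noncomputable def OmegaC (S T : MIO A) : MIO (A ⊕ A) :=
  Omega (oOf S T) S Set.inter_subset_left

/-- Composability of the queue-extended MIOs, i.e. definedness of `S ⊗_as T`. -/
def AsyncComposable (S T : MIO A) : Prop := Composable (OmegaC S T) (OmegaC T S)

/-- Asynchronous composition `S ⊗_as T = Ω_{o_S}(S) ⊗_sy Ω_{o_T}(T)`. -/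
noncomputable def asyncComp (S T : MIO A) (h : AsyncComposable S T) : MIO (A ⊕ A) :=
  syncComp (OmegaC S T) (OmegaC T S) h

/-- Asynchronous modal compatibility `S ⇄_ac T`. -/
def AsyncCompat (S T : MIO A) : Prop :=
  Composable S T ∧ WeakCompat (OmegaC S T) (OmegaC T S)


/-! ### Auxiliary lemmas for compositionality -/

section Aux

lemma act_eq_of_sigEq {S S' : MIO A} (h : SigEq S' S) : S'.act = S.act := by
  obtain ⟨h1, h2, h3⟩ := h
  unfold act
  rw [h1, h2, h3]

lemma composable_of_sigEq {S S' T T' : MIO A} (hS : SigEq S' S) (hT : SigEq T' T)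
    (h : Composable S T) : Composable S' T' := by
  unfold Composable shared at *
  rw [act_eq_of_sigEq hS, act_eq_of_sigEq hT, hS.1, hS.2.1, hT.1, hT.2.1]
  exact h

lemma not_shared_left {U V : MIO A} (h : Composable U V) {a : A} (ha : a ∈ U.intl) :
    a ∉ shared U V := by
  intro hsh
  rcases h hsh with ⟨h1, _⟩ | ⟨_, h2⟩
  · exact U.inp_intl a h1 ha
  · exact U.out_intl a h2 ha

lemma not_shared_right {U V : MIO A} (h : Composable U V) {a : A} (ha : a ∈ V.intl) :
    a ∉ shared U V := by
  intro hsh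
  rcases h hsh with ⟨_, h2⟩ | ⟨h1, _⟩
  · exact V.out_intl a h2 ha
  · exact V.inp_intl a h1 ha

section Lifts

variable {U V : MIO A} (h : Composable U V)

lemma tauMust_liftL {s s' : U.State} (hm : U.tauMust s s') (t : V.State) :
    (syncComp U V h).tauMust (s, t) (s', t) := by
  obtain ⟨a, ha, hm⟩ := hm
  exact ⟨a, Or.inl (Or.inl ha), Or.inr (Or.inl ⟨Or.inr ha, not_shared_left h ha, hm, rfl⟩)⟩

lemma tauMust_liftR {t t' : V.State} (hm : V.tauMust t t') (s : U.State) :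
    (syncComp U V h).tauMust (s, t) (s, t') := by
  obtain ⟨a, ha, hm⟩ := hm
  exact ⟨a, Or.inl (Or.inr ha), Or.inr (Or.inr ⟨Or.inr ha, not_shared_right h ha, hm, rfl⟩)⟩

lemma tauMay_liftL {s s' : U.State} (hm : U.tauMay s s') (t : V.State) :
    (syncComp U V h).tauMay (s, t) (s', t) := by
  obtain ⟨a, ha, hm⟩ := hm
  exact ⟨a, Or.inl (Or.inl ha), Or.inr (Or.inl ⟨Or.inr ha, not_shared_left h ha, hm, rfl⟩)⟩

lemma tauMay_liftR {t t' : V.State} (hm : V.tauMay t t') (s : U.State) :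
    (syncComp U V h).tauMay (s, t) (s, t') := by
  obtain ⟨a, ha, hm⟩ := hm
  exact ⟨a, Or.inl (Or.inr ha), Or.inr (Or.inr ⟨Or.inr ha, not_shared_right h ha, hm, rfl⟩)⟩

lemma tauMustStar_liftL {s s' : U.State} (hm : U.tauMustStar s s') (t : V.State) :
    (syncComp U V h).tauMustStar (s, t) (s', t) :=
  Relation.ReflTransGen.lift (fun x => (x, t)) (fun _ _ hm => tauMust_liftL h hm t) _ _ hm

lemma tauMustStar_liftR {t t' : V.State} (hm : V.tauMustStar t t') (s : U.State) :
    (syncComp U V h).tauMustStar (s, t) (s, t') :=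
  Relation.ReflTransGen.lift (fun x => (s, x)) (fun _ _ hm => tauMust_liftR h hm s) _ _ hm

lemma tauMayStar_liftL {s s' : U.State} (hm : U.tauMayStar s s') (t : V.State) :
    (syncComp U V h).tauMayStar (s, t) (s', t) :=
  Relation.ReflTransGen.lift (fun x => (x, t)) (fun _ _ hm => tauMay_liftL h hm t) _ _ hm

lemma tauMayStar_liftR {t t' : V.State} (hm : V.tauMayStar t t') (s : U.State) :
    (syncComp U V h).tauMayStar (s, t) (s, t') :=
  Relation.ReflTransGen.lift (fun x => (s, x)) (fun _ _ hm => tauMay_liftR h hm s) _ _ hm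

end Lifts

/-- Weak modal refinement is compositional for synchronous composition. -/
lemma syncComp_weakRefines {U' U V' V : MIO A} (hU : WeakRefines U' U) (hV : WeakRefines V' V)
    (h : Composable U V) (h' : Composable U' V') :
    WeakRefines (syncComp U' V' h') (syncComp U V h) := by
  obtain ⟨⟨eUi, eUo, eUl⟩, RU, hRU0, hRU⟩ := hU
  obtain ⟨⟨eVi, eVo, eVl⟩, RV, hRV0, hRV⟩ := hV
  have hactU : U'.act = U.act := by unfold act; rw [eUi, eUo, eUl]
  have hactV : V'.act = V.act := by unfold act; rw [eVi, eVo, eVl]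
  have hshared : shared U' V' = shared U V := by unfold shared; rw [hactU, hactV]
  refine ⟨⟨?_, ?_, ?_⟩, fun p q => RU p.1 q.1 ∧ RV p.2 q.2, ⟨hRU0, hRV0⟩, ?_⟩
  · show (U'.inp ∪ V'.inp) \ _ = (U.inp ∪ V.inp) \ _
    rw [eUi, eVi, hshared]
  · show (U'.out ∪ V'.out) \ _ = (U.out ∪ V.out) \ _
    rw [eUo, eVo, hshared]
  · show U'.intl ∪ V'.intl ∪ _ = U.intl ∪ V.intl ∪ _
    rw [eUl, eVl, hshared]
  rintro ⟨cs, ct⟩ ⟨s, t⟩ ⟨hRs, hRt⟩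
  refine ⟨?_, ?_, ?_, ?_⟩
  · -- visible musts of abstract
    rintro a ha q' (⟨hsh, -, -⟩ | ⟨hact, hns, hm, heq⟩ | ⟨hact, hns, hm, heq⟩)
    · exact absurd hsh (by rcases ha with ⟨-, hn⟩ | ⟨-, hn⟩ <;> exact hn)
    · -- left-only transition
      have haUio : a ∈ U.inp ∪ U.out := by
        rcases hact with (hx | hx) | hx
        · exact Or.inl hx
        · exact Or.inr hx
        · exfalso
          rcases ha with ⟨h1 | h1, -⟩ | ⟨h1 | h1, -⟩
          · exact U.inp_intl a h1 hx
          · exact hns ⟨Or.inr hx, Or.inl (Or.inl h1)⟩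
          · exact U.out_intl a h1 hx
          · exact hns ⟨Or.inr hx, Or.inl (Or.inr h1)⟩
      obtain ⟨s1, s2, s', st1, hm', st2, hR'⟩ := (hRU _ _ hRs).1 a haUio q'.1 hm
      refine ⟨(s1, ct), (s2, ct), (s', ct), tauMustStar_liftL h' st1 ct,
        Or.inr (Or.inl ⟨(by rw [hactU]; exact Or.inl haUio), fun hx => hns (hshared ▸ hx), hm', rfl⟩),
        tauMustStar_liftL h' st2 ct, hR', by rw [heq]; exact hRt⟩
    · -- right-only transition
      have haVio : a ∈ V.inp ∪ V.out := by
        rcases hact with (hx | hx) | hx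
        · exact Or.inl hx
        · exact Or.inr hx
        · exfalso
          rcases ha with ⟨h1 | h1, -⟩ | ⟨h1 | h1, -⟩
          · exact hns ⟨Or.inl (Or.inl h1), Or.inr hx⟩
          · exact V.inp_intl a h1 hx
          · exact hns ⟨Or.inl (Or.inr h1), Or.inr hx⟩
          · exact V.out_intl a h1 hx
      obtain ⟨t1, t2, t', st1, hm', st2, hR'⟩ := (hRV _ _ hRt).1 a haVio q'.2 hm
      refine ⟨(cs, t1), (cs, t2), (cs, t'), tauMustStar_liftR h' st1 cs,
        Or.inr (Or.inr ⟨(by rw [hactV]; exact Or.inl haVio), fun hx => hns (hshared ▸ hx), hm', rfl⟩),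
        tauMustStar_liftR h' st2 cs, by rw [heq]; exact hRs, hR'⟩
  · -- internal musts of abstract
    rintro a ha q' (⟨hsh, hmU, hmV⟩ | ⟨hact, hns, hm, heq⟩ | ⟨hact, hns, hm, heq⟩)
    · have hsh' : a ∈ shared U' V' := by rw [hshared]; exact hsh
      have haU : a ∈ U.inp ∪ U.out := by
        rcases h hsh with ⟨h1, -⟩ | ⟨-, h2⟩
        · exact Or.inl h1
        · exact Or.inr h2
      have haV : a ∈ V.inp ∪ V.out := by
        rcases h hsh with ⟨-, h2⟩ | ⟨h1, -⟩
        · exact Or.inr h2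
        · exact Or.inl h1
      obtain ⟨u1, u2, u', ust1, hmu, ust2, hRu⟩ := (hRU _ _ hRs).1 a haU q'.1 hmU
      obtain ⟨v1, v2, v', vst1, hmv, vst2, hRv⟩ := (hRV _ _ hRt).1 a haV q'.2 hmV
      refine ⟨(u', v'), ?_, hRu, hRv⟩
      have mid : (syncComp U' V' h').tauMust (u1, v1) (u2, v2) :=
        ⟨a, Or.inr hsh', Or.inl ⟨hsh', hmu, hmv⟩⟩
      exact (tauMustStar_liftL h' ust1 ct).trans
        ((tauMustStar_liftR h' vst1 u1).trans
          ((Relation.ReflTransGen.single mid).trans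
            ((tauMustStar_liftL h' ust2 v2).trans (tauMustStar_liftR h' vst2 u'))))
    · have hil : a ∈ U.intl := by
        rcases ha with (hx | hx) | hx
        · exact hx
        · exact absurd ⟨hact, Or.inr hx⟩ hns
        · exact absurd hx hns
      obtain ⟨u', ust, hRu⟩ := (hRU _ _ hRs).2.1 a hil q'.1 hm
      exact ⟨(u', ct), tauMustStar_liftL h' ust ct, hRu, by rw [heq]; exact hRt⟩
    · have hil : a ∈ V.intl := by
        rcases ha with (hx | hx) | hx
        · exact absurd ⟨Or.inr hx, hact⟩ hns
        · exact hx
        · exact absurd hx hns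
      obtain ⟨v', vst, hRv⟩ := (hRV _ _ hRt).2.1 a hil q'.2 hm
      exact ⟨(cs, v'), tauMustStar_liftR h' vst cs, by rw [heq]; exact hRs, hRv⟩
  · -- visible mays of concrete
    rintro a ha q' (⟨hsh, -, -⟩ | ⟨hact, hns, hm, heq⟩ | ⟨hact, hns, hm, heq⟩)
    · exact absurd hsh (by rcases ha with ⟨-, hn⟩ | ⟨-, hn⟩ <;> exact hn)
    · have haUio : a ∈ U'.inp ∪ U'.out := by
        rcases hact with (hx | hx) | hx
        · exact Or.inl hx
        · exact Or.inr hx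
        · exfalso
          rcases ha with ⟨h1 | h1, -⟩ | ⟨h1 | h1, -⟩
          · exact U'.inp_intl a h1 hx
          · exact hns ⟨Or.inr hx, Or.inl (Or.inl h1)⟩
          · exact U'.out_intl a h1 hx
          · exact hns ⟨Or.inr hx, Or.inl (Or.inr h1)⟩
      obtain ⟨t1, t2, t', st1, hm', st2, hR'⟩ := (hRU _ _ hRs).2.2.1 a haUio q'.1 hm
      refine ⟨(t1, t), (t2, t), (t', t), tauMayStar_liftL h st1 t,
        Or.inr (Or.inl ⟨(by rw [← hactU]; exact Or.inl haUio), fun hx => hns (hshared.symm ▸ hx), hm', rfl⟩),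
        tauMayStar_liftL h st2 t, hR', by rw [heq]; exact hRt⟩
    · have haVio : a ∈ V'.inp ∪ V'.out := by
        rcases hact with (hx | hx) | hx
        · exact Or.inl hx
        · exact Or.inr hx
        · exfalso
          rcases ha with ⟨h1 | h1, -⟩ | ⟨h1 | h1, -⟩
          · exact hns ⟨Or.inl (Or.inl h1), Or.inr hx⟩
          · exact V'.inp_intl a h1 hx
          · exact hns ⟨Or.inl (Or.inr h1), Or.inr hx⟩
          · exact V'.out_intl a h1 hx
      obtain ⟨t1, t2, t', st1, hm', st2, hR'⟩ := (hRV _ _ hRt).2.2.1 a haVio q'.2 hm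
      refine ⟨(s, t1), (s, t2), (s, t'), tauMayStar_liftR h st1 s,
        Or.inr (Or.inr ⟨(by rw [← hactV]; exact Or.inl haVio), fun hx => hns (hshared.symm ▸ hx), hm', rfl⟩),
        tauMayStar_liftR h st2 s, by rw [heq]; exact hRs, hR'⟩
  · -- internal mays of concrete
    rintro a ha q' (⟨hsh', hmU, hmV⟩ | ⟨hact, hns, hm, heq⟩ | ⟨hact, hns, hm, heq⟩)
    · have hsh : a ∈ shared U V := by rw [← hshared]; exact hsh'
      have haU : a ∈ U'.inp ∪ U'.out := by
        rcases h' hsh' with ⟨h1, -⟩ | ⟨-, h2⟩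
        · exact Or.inl h1
        · exact Or.inr h2
      have haV : a ∈ V'.inp ∪ V'.out := by
        rcases h' hsh' with ⟨-, h2⟩ | ⟨h1, -⟩
        · exact Or.inr h2
        · exact Or.inl h1
      obtain ⟨u1, u2, u', ust1, hmu, ust2, hRu⟩ := (hRU _ _ hRs).2.2.1 a haU q'.1 hmU
      obtain ⟨v1, v2, v', vst1, hmv, vst2, hRv⟩ := (hRV _ _ hRt).2.2.1 a haV q'.2 hmV
      refine ⟨(u', v'), ?_, hRu, hRv⟩
      have mid : (syncComp U V h).tauMay (u1, v1) (u2, v2) :=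
        ⟨a, Or.inr hsh, Or.inl ⟨hsh, hmu, hmv⟩⟩
      exact (tauMayStar_liftL h ust1 t).trans
        ((tauMayStar_liftR h vst1 u1).trans
          ((Relation.ReflTransGen.single mid).trans
            ((tauMayStar_liftL h ust2 v2).trans (tauMayStar_liftR h vst2 u'))))
    · have hil : a ∈ U'.intl := by
        rcases ha with (hx | hx) | hx
        · exact hx
        · exact absurd ⟨hact, Or.inr hx⟩ hns
        · exact absurd hx hns
      obtain ⟨u', ust, hRu⟩ := (hRU _ _ hRs).2.2.2 a hil q'.1 hm
      exact ⟨(u', t), tauMayStar_liftL h ust t, hRu, by rw [heq]; exact hRt⟩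
    · have hil : a ∈ V'.intl := by
        rcases ha with (hx | hx) | hx
        · exact absurd ⟨Or.inr hx, hact⟩ hns
        · exact hx
        · exact absurd hx hns
      obtain ⟨v', vst, hRv⟩ := (hRV _ _ hRt).2.2.2 a hil q'.2 hm
      exact ⟨(s, v'), tauMayStar_liftR h vst s, by rw [heq]; exact hRs, hRv⟩

end Aux


section Aux2

lemma weakRefines_refl (M : MIO A) : WeakRefines M M := by
  refine ⟨⟨rfl, rfl, rfl⟩, Eq, rfl, ?_⟩
  rintro s t rfl
  exact ⟨fun a _ t' hm => ⟨s, t', t', .refl, hm, .refl, rfl⟩,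
    fun a ha t' hm => ⟨t', .single ⟨a, ha, hm⟩, rfl⟩,
    fun a _ s' hm => ⟨s, s', s', .refl, hm, .refl, rfl⟩,
    fun a ha s' hm => ⟨s', .single ⟨a, ha, hm⟩, rfl⟩⟩

lemma rename_tauMustStar (f : A → B) (hf : Function.Injective f) {S : MIO A} {s s' : S.State}
    (h : S.tauMustStar s s') : (rename f hf S).tauMustStar s s' :=
  Relation.ReflTransGen.lift id
    (fun _ _ hm => hm.elim fun c hc => ⟨f c, ⟨c, hc.1, rfl⟩, c, rfl, hc.2⟩) _ _ h

lemma rename_tauMayStar (f : A → B) (hf : Function.Injective f) {S : MIO A} {s s' : S.State}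
    (h : S.tauMayStar s s') : (rename f hf S).tauMayStar s s' :=
  Relation.ReflTransGen.lift id
    (fun _ _ hm => hm.elim fun c hc => ⟨f c, ⟨c, hc.1, rfl⟩, c, rfl, hc.2⟩) _ _ h

lemma rename_weakRefines (f : A → B) (hf : Function.Injective f) {S' S : MIO A}
    (h : WeakRefines S' S) : WeakRefines (rename f hf S') (rename f hf S) := by
  obtain ⟨⟨e1, e2, e3⟩, R, hR0, hR⟩ := h
  refine ⟨⟨?_, ?_, ?_⟩, R, hR0, ?_⟩
  · show f '' S'.inp = f '' S.inp; rw [e1]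
  · show f '' S'.out = f '' S.out; rw [e2]
  · show f '' S'.intl = f '' S.intl; rw [e3]
  intro s t hst
  refine ⟨?_, ?_, ?_, ?_⟩
  · rintro b hb t' ⟨a, rfl, hm⟩
    have haio : a ∈ S.inp ∪ S.out := by
      rcases hb with ⟨a', ha', he⟩ | ⟨a', ha', he⟩
      · exact Or.inl (hf he ▸ ha')
      · exact Or.inr (hf he ▸ ha')
    obtain ⟨s1, s2, s', st1, hm', st2, hR'⟩ := (hR s t hst).1 a haio t' hm
    exact ⟨s1, s2, s', rename_tauMustStar f hf st1, ⟨a, rfl, hm'⟩,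
      rename_tauMustStar f hf st2, hR'⟩
  · rintro b hb t' ⟨a, rfl, hm⟩
    obtain ⟨a', ha', he⟩ := hb
    obtain ⟨s', st, hR'⟩ := (hR s t hst).2.1 a (hf he ▸ ha') t' hm
    exact ⟨s', rename_tauMustStar f hf st, hR'⟩
  · rintro b hb s' ⟨a, rfl, hm⟩
    have haio : a ∈ S'.inp ∪ S'.out := by
      rcases hb with ⟨a', ha', he⟩ | ⟨a', ha', he⟩
      · exact Or.inl (hf he ▸ ha')
      · exact Or.inr (hf he ▸ ha')
    obtain ⟨t1, t2, t', st1, hm', st2, hR'⟩ := (hR s t hst).2.2.1 a haio s' hm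
    exact ⟨t1, t2, t', rename_tauMayStar f hf st1, ⟨a, rfl, hm'⟩,
      rename_tauMayStar f hf st2, hR'⟩
  · rintro b hb s' ⟨a, rfl, hm⟩
    obtain ⟨a', ha', he⟩ := hb
    obtain ⟨t', st, hR'⟩ := (hR s t hst).2.2.2 a (hf he ▸ ha') s' hm
    exact ⟨t', rename_tauMayStar f hf st, hR'⟩

lemma tagged_eq_inl {o : Set A} {a : A} (ha : a ∉ o) : tagged o a = Sum.inl a := by
  simp [tagged, ha]

lemma tagged_eq_inr {o : Set A} {a : A} (ha : a ∈ o) : tagged o a = Sum.inr a := by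
  simp [tagged, ha]

lemma shared_rename_queue (o : Set A) (S : MIO A) (_ho : o ⊆ S.out) :
    shared (rename (tagged o) (tagged_injective o) S) (queueMIO o) = Sum.inr '' o := by
  ext b
  constructor
  · rintro ⟨hb1, hb2⟩
    rcases hb2 with (⟨n, hn, he⟩ | ⟨n, hn, he⟩) | hb2
    · exact ⟨n, hn, he⟩
    · exfalso
      rcases hb1 with (⟨a, ha, he'⟩ | ⟨a, ha, he'⟩) | ⟨a, ha, he'⟩ <;>
      · subst he'
        by_cases hao : a ∈ o
        · rw [tagged_eq_inr hao] at he; exact (Sum.inl_ne_inr he).elim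
        · rw [tagged_eq_inl hao] at he
          obtain rfl : n = a := Sum.inl.inj he
          exact hao hn
    · exact hb2.elim
  · rintro ⟨n, hn, rfl⟩
    exact ⟨Or.inl (Or.inr ⟨n, _ho hn, tagged_eq_inr hn⟩), Or.inl (Or.inl ⟨n, hn, rfl⟩)⟩

lemma Omega_inp (o : Set A) (S : MIO A) (ho : o ⊆ S.out) :
    (Omega o S ho).inp = Sum.inl '' S.inp := by
  show (tagged o '' S.inp ∪ Sum.inr '' o) \ _ = _
  rw [shared_rename_queue o S ho]
  ext b
  constructor
  · rintro ⟨⟨a, ha, rfl⟩ | ⟨a, ha, rfl⟩, hnb⟩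
    · have hao : a ∉ o := fun hx => S.inp_out a ha (ho hx)
      exact ⟨a, ha, (tagged_eq_inl hao).symm⟩
    · exact absurd ⟨a, ha, rfl⟩ hnb
  · rintro ⟨a, ha, rfl⟩
    have hao : a ∉ o := fun hx => S.inp_out a ha (ho hx)
    exact ⟨Or.inl ⟨a, ha, tagged_eq_inl hao⟩, by rintro ⟨n, hn, he⟩; exact (Sum.inr_ne_inl he).elim⟩

lemma Omega_out (o : Set A) (S : MIO A) (ho : o ⊆ S.out) :
    (Omega o S ho).out = Sum.inl '' S.out := by
  show (tagged o '' S.out ∪ Sum.inl '' o) \ _ = _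
  rw [shared_rename_queue o S ho]
  ext b
  constructor
  · rintro ⟨⟨a, ha, rfl⟩ | ⟨a, ha, rfl⟩, hnb⟩
    · by_cases hao : a ∈ o
      · exact absurd ⟨a, hao, (tagged_eq_inr hao).symm⟩ hnb
      · exact ⟨a, ha, (tagged_eq_inl hao).symm⟩
    · exact ⟨a, ho ha, rfl⟩
  · rintro ⟨a, ha, rfl⟩
    refine ⟨?_, by rintro ⟨n, hn, he⟩; exact (Sum.inr_ne_inl he).elim⟩
    by_cases hao : a ∈ o
    · exact Or.inr ⟨a, hao, rfl⟩
    · exact Or.inl ⟨a, ha, tagged_eq_inl hao⟩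

lemma Omega_intl (o : Set A) (S : MIO A) (ho : o ⊆ S.out) :
    (Omega o S ho).intl = Sum.inl '' S.intl ∪ Sum.inr '' o := by
  show tagged o '' S.intl ∪ ∅ ∪ _ = _
  rw [shared_rename_queue o S ho, Set.union_empty]
  congr 1
  ext b
  constructor
  · rintro ⟨a, ha, rfl⟩
    have hao : a ∉ o := fun hx => S.out_intl a (ho hx) ha
    exact ⟨a, ha, (tagged_eq_inl hao).symm⟩
  · rintro ⟨a, ha, rfl⟩
    have hao : a ∉ o := fun hx => S.out_intl a (ho hx) ha
    exact ⟨a, ha, tagged_eq_inl hao⟩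

lemma Omega_act (o : Set A) (S : MIO A) (ho : o ⊆ S.out) :
    (Omega o S ho).act = Sum.inl '' S.act ∪ Sum.inr '' o := by
  unfold act
  rw [Omega_inp o S ho, Omega_out o S ho, Omega_intl o S ho, ← Set.union_assoc,
    ← Set.image_union, ← Set.image_union]

lemma Omega_congr (o o' : Set A) (S : MIO A) (ho : o ⊆ S.out) (ho' : o' ⊆ S.out)
    (e : o = o') : Omega o S ho = Omega o' S ho' := by subst e; rfl

lemma asyncComposable_of_composable {S T : MIO A} (h : Composable S T) :
    AsyncComposable S T := by
  rintro b ⟨hb1, hb2⟩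
  rw [show (OmegaC S T).act = _ from Omega_act (oOf S T) S Set.inter_subset_left] at hb1
  rw [show (OmegaC T S).act = _ from Omega_act (oOf T S) T Set.inter_subset_left] at hb2
  rw [show (OmegaC S T).inp = _ from Omega_inp (oOf S T) S Set.inter_subset_left,
    show (OmegaC S T).out = _ from Omega_out (oOf S T) S Set.inter_subset_left,
    show (OmegaC T S).inp = _ from Omega_inp (oOf T S) T Set.inter_subset_left,
    show (OmegaC T S).out = _ from Omega_out (oOf T S) T Set.inter_subset_left]
  rcases hb1 with ⟨a, ha, rfl⟩ | ⟨n, hn, rfl⟩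
  · rcases hb2 with ⟨a', ha', he⟩ | ⟨n', hn', he⟩
    · have heq : a' = a := Sum.inl.inj he
      subst heq
      rcases h ⟨ha, ha'⟩ with ⟨h1, h2⟩ | ⟨h1, h2⟩
      · exact Or.inl ⟨⟨a', h1, rfl⟩, ⟨a', h2, rfl⟩⟩
      · exact Or.inr ⟨⟨a', h1, rfl⟩, ⟨a', h2, rfl⟩⟩
    · exact (Sum.inr_ne_inl he).elim
  · rcases hb2 with ⟨a', ha', he⟩ | ⟨n', hn', he⟩
    · exact (Sum.inl_ne_inr he).elim
    · have heq : n' = n := Sum.inr.inj he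
      subst heq
      exact (T.inp_out n' hn.2 hn'.1).elim

lemma omega_weakRefines {S' S : MIO A} (h : WeakRefines S' S) (o : Set A)
    (ho : o ⊆ S.out) (ho' : o ⊆ S'.out) :
    WeakRefines (Omega o S' ho') (Omega o S ho) :=
  syncComp_weakRefines (rename_weakRefines (tagged o) (tagged_injective o) h)
    (weakRefines_refl (queueMIO o)) (omega_composable o S ho) (omega_composable o S' ho')

end Aux2

end MIO

open MIO

/-- Weak modal refinement is compositional w.r.t. asynchronous composition. -/
theorem weakRefines_async_compositional (A : Type) (S S' T T' : MIO A)
    (hS : WeakRefines S' S) (hT : WeakRefines T' T) (h : Composable S T) :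
    Composable S' T' ∧
    ∃ (hA : AsyncComposable S T) (hA' : AsyncComposable S' T'),
      WeakRefines (asyncComp S' T' hA') (asyncComp S T hA) := by
  have sigS : SigEq S' S := hS.1
  have sigT : SigEq T' T := hT.1
  have h' : Composable S' T' := composable_of_sigEq sigS sigT h
  have hoS : oOf S' T' = oOf S T := by unfold oOf; rw [sigS.2.1, sigT.1]
  have hoT : oOf T' S' = oOf T S := by unfold oOf; rw [sigT.2.1, sigS.1]
  have hoS' : oOf S T ⊆ S'.out := by rw [sigS.2.1]; exact Set.inter_subset_left
  have hoT' : oOf T S ⊆ T'.out := by rw [sigT.2.1]; exact Set.inter_subset_left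
  have hWS : WeakRefines (OmegaC S' T') (OmegaC S T) := by
    have e : OmegaC S' T' = Omega (oOf S T) S' hoS' :=
      Omega_congr _ _ _ _ _ hoS
    rw [e]
    exact omega_weakRefines hS (oOf S T) Set.inter_subset_left hoS'
  have hWT : WeakRefines (OmegaC T' S') (OmegaC T S) := by
    have e : OmegaC T' S' = Omega (oOf T S) T' hoT' :=
      Omega_congr _ _ _ _ _ hoT
    rw [e]
    exact omega_weakRefines hT (oOf T S) Set.inter_subset_left hoT'
  have hA : AsyncComposable S T := asyncComposable_of_composable h
  have hA' : AsyncComposable S' T' := composable_of_sigEq hWS.1 hWT.1 hA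
  exact ⟨h', hA, hA', syncComp_weakRefines hWS hWT hA hA'⟩
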